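/- Let F : ℂ → ℂ be defined by F(z) = ((i+1)z² + (i−1)) / ((i−1)z² + (i+1)). Then the denominator (i−1)z² + (i+1) is nonzero at each of the points 0, 1, −1, i, −i, and F(0) = i, F(1) = 1, F(−1) = 1, F(i) = −1, F(−i) = −1, and F(z) tends to −i as z tends to infinity. Consequently the set {1, −1, i, −i} is mapped into itself by F, the critical orbit portrait is 0 ↦ i ↦ −1 ↦ 1 ↦ 1 and ∞ ↦ −i ↦ −1, and the third iterate F∘F∘F sends each of the points 0, 1, −1, i, −i to the fixed point 1. Hence F is postcritically finite with postcritical set contained in {1, −1, i, −i}. -/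

import Mathlib

open Complex

/-- The rational map Thurston-equivalent to the topological self-mating of `f_{1/4}`
(Milnor's example): `F(z) = ((i+1)z² + (i−1)) / ((i−1)z² + (i+1))`. -/
noncomputable def Fquarter (z : ℂ) : ℂ :=
  ((Complex.I + 1) * z ^ 2 + (Complex.I - 1)) / ((Complex.I - 1) * z ^ 2 + (Complex.I + 1))

lemma denom_cobounded :
    Filter.Tendsto (fun z : ℂ => (Complex.I - 1) * z ^ 2 + (Complex.I + 1))
      (Bornology.cobounded ℂ) (Bornology.cobounded ℂ) := by
  rw [← tendsto_norm_atTop_iff_cobounded]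
  have hI : ‖Complex.I - 1‖ = Real.sqrt 2 := by
    rw [Complex.norm_def, Complex.normSq_apply]
    norm_num
  have h1 : Filter.Tendsto (fun z : ℂ => Real.sqrt 2 * ‖z‖ ^ 2 - ‖Complex.I + 1‖)
      (Bornology.cobounded ℂ) Filter.atTop := by
    apply Filter.tendsto_atTop_add_const_right
    apply Filter.Tendsto.const_mul_atTop (by positivity)
    exact (Filter.tendsto_pow_atTop two_ne_zero).comp tendsto_norm_cobounded_atTop
  refine Filter.tendsto_atTop_mono (fun z => ?_) h1
  calc Real.sqrt 2 * ‖z‖ ^ 2 - ‖Complex.I + 1‖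
      = ‖(Complex.I - 1) * z ^ 2‖ - ‖Complex.I + 1‖ := by
        rw [norm_mul, norm_pow, hI]
    _ ≤ ‖(Complex.I - 1) * z ^ 2 + (Complex.I + 1)‖ := by
        have := norm_sub_norm_le ((Complex.I - 1) * z ^ 2) (-(Complex.I + 1))
        rwa [sub_neg_eq_add, norm_neg] at this

theorem stmt_10 :
    ((Complex.I - 1) * (0 : ℂ) ^ 2 + (Complex.I + 1) ≠ 0) ∧
    ((Complex.I - 1) * (1 : ℂ) ^ 2 + (Complex.I + 1) ≠ 0) ∧
    ((Complex.I - 1) * (-1 : ℂ) ^ 2 + (Complex.I + 1) ≠ 0) ∧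
    ((Complex.I - 1) * Complex.I ^ 2 + (Complex.I + 1) ≠ 0) ∧
    ((Complex.I - 1) * (-Complex.I) ^ 2 + (Complex.I + 1) ≠ 0) ∧
    Fquarter 0 = Complex.I ∧
    Fquarter 1 = 1 ∧
    Fquarter (-1) = 1 ∧
    Fquarter Complex.I = -1 ∧
    Fquarter (-Complex.I) = -1 ∧
    Filter.Tendsto Fquarter (Bornology.cobounded ℂ) (nhds (-Complex.I)) ∧
    Set.MapsTo Fquarter {1, -1, Complex.I, -Complex.I} {1, -1, Complex.I, -Complex.I} ∧
    (∀ z ∈ ({0, 1, -1, Complex.I, -Complex.I} : Set ℂ),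
      (Fquarter ∘ Fquarter ∘ Fquarter) z = 1) := by
  have h0 : ((Complex.I - 1) * (0 : ℂ) ^ 2 + (Complex.I + 1) ≠ 0) := by
    simp [Complex.ext_iff]
  have h1 : ((Complex.I - 1) * (1 : ℂ) ^ 2 + (Complex.I + 1) ≠ 0) := by
    simp [Complex.ext_iff]
  have h2 : ((Complex.I - 1) * (-1 : ℂ) ^ 2 + (Complex.I + 1) ≠ 0) := by
    simp [Complex.ext_iff]
  have h3 : ((Complex.I - 1) * Complex.I ^ 2 + (Complex.I + 1) ≠ 0) := by
    simp [Complex.ext_iff, Complex.I_sq]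
  have h4 : ((Complex.I - 1) * (-Complex.I) ^ 2 + (Complex.I + 1) ≠ 0) := by
    simp [Complex.ext_iff, Complex.I_sq, neg_pow]
  have e0 : Fquarter 0 = Complex.I := by
    rw [Fquarter, div_eq_iff h0]
    linear_combination -Complex.I_sq
  have e1 : Fquarter 1 = 1 := by
    rw [Fquarter, div_eq_iff h1]; ring
  have e2 : Fquarter (-1) = 1 := by
    rw [Fquarter, div_eq_iff h2]; ring
  have e3 : Fquarter Complex.I = -1 := by
    rw [Fquarter, div_eq_iff h3]
    linear_combination 2 * Complex.I * Complex.I_sq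
  have e4 : Fquarter (-Complex.I) = -1 := by
    rw [Fquarter, div_eq_iff h4]
    linear_combination 2 * Complex.I * Complex.I_sq
  have tends : Filter.Tendsto Fquarter (Bornology.cobounded ℂ) (nhds (-Complex.I)) := by
    have hne : ∀ᶠ z : ℂ in Bornology.cobounded ℂ,
        (Complex.I - 1) * z ^ 2 + (Complex.I + 1) ≠ 0 := by
      filter_upwards [denom_cobounded.eventually (eventually_cobounded_le_norm 1)] with z hz
      intro h
      rw [h] at hz
      simp at hz
      linarith
    have hev : ∀ᶠ z : ℂ in Bornology.cobounded ℂ,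
        -Complex.I + 2 * (Complex.I - 1) *
          ((Complex.I - 1) * z ^ 2 + (Complex.I + 1))⁻¹ = Fquarter z := by
      filter_upwards [hne] with z hz
      rw [Fquarter]
      field_simp
      linear_combination (-z ^ 2 - 1) * Complex.I_sq
    have hlim : Filter.Tendsto (fun z : ℂ => -Complex.I + 2 * (Complex.I - 1) *
          ((Complex.I - 1) * z ^ 2 + (Complex.I + 1))⁻¹)
        (Bornology.cobounded ℂ) (nhds (-Complex.I)) := by
      have : Filter.Tendsto (fun z : ℂ => ((Complex.I - 1) * z ^ 2 + (Complex.I + 1))⁻¹)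
          (Bornology.cobounded ℂ) (nhds 0) :=
        Filter.tendsto_inv₀_cobounded.comp denom_cobounded
      have h2' := (tendsto_const_nhds (x := -Complex.I)
        (f := Bornology.cobounded ℂ)).add (this.const_mul (2 * (Complex.I - 1)))
      simpa using h2'
    exact hlim.congr' hev
  refine ⟨h0, h1, h2, h3, h4, e0, e1, e2, e3, e4, tends, ?_, ?_⟩
  · rintro z (rfl | rfl | rfl | rfl) <;>
      simp [e1, e2, e3, e4]
  · rintro z (rfl | rfl | rfl | rfl | rfl) <;>
      simp [Function.comp, e0, e1, e2, e3, e4]
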